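/- Let X be a flow space for G and γ > 0. For every y ∈ Y_axes, the orbit G·y ⊆ Y_axes is closed and discrete. -/

import Mathlib

open Pointwise


private lemma closed_union_smul {G X : Type*} [Group G] [MetricSpace X] [MulAction G X]
    (hiso : ∀ g : G, Isometry (fun x : X => g • x))
    (hproper : ∀ K : Set X, IsCompact K → {g : G | (K ∩ g • K).Nonempty}.Finite)
    {S : Set X} (hS : IsCompact S) (T : Set G) :
    IsClosed (⋃ g ∈ T, g • S) := by
  have hseq : IsSeqClosed (⋃ g ∈ T, g • S) := by
    intro u x hu hux
    have hex : ∀ n, ∃ g, g ∈ T ∧ u n ∈ g • S := by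
      intro n; simpa only [Set.mem_iUnion, exists_prop] using hu n
    choose gs hgT hgS using hex
    set K := insert x (Set.range u) ∪ S with hK
    have hKc : IsCompact K := (hux.isCompact_insert_range).union hS
    have hmem : ∀ n, gs n ∈ {g : G | (K ∩ g • K).Nonempty} := by
      intro n
      obtain ⟨s, hs, hsu⟩ := hgS n
      exact ⟨u n, Or.inl (Set.mem_insert_of_mem _ ⟨n, rfl⟩), ⟨s, Or.inr hs, hsu⟩⟩
    have hfin := hproper K hKc
    haveI : Finite {g : G // g ∈ {g : G | (K ∩ g • K).Nonempty}} := hfin.to_subtype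
    obtain ⟨⟨g, hg⟩, hginf⟩ := Finite.exists_infinite_fiber
      (fun n : ℕ => (⟨gs n, hmem n⟩ : {g : G // g ∈ {g : G | (K ∩ g • K).Nonempty}}))
    have hfreq : ∃ᶠ n in Filter.atTop, gs n = g := by
      rw [Nat.frequently_atTop_iff_infinite]
      refine (Set.infinite_coe_iff.mp hginf).mono ?_
      intro n hn
      simpa using congrArg Subtype.val hn
    obtain ⟨n0, hn0⟩ := hfreq.exists
    have hgSc : IsClosed (g • S) := by
      have : IsCompact (g • S) := by
        rw [← Set.image_smul]
        exact hS.image (hiso g).continuous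
      exact this.isClosed
    have hx : x ∈ g • S := by
      have hf2 : ∃ᶠ n in Filter.atTop, u n ∈ g • S :=
        hfreq.mono fun n hn => hn ▸ hgS n
      have := mem_closure_of_frequently_of_tendsto hf2 hux
      rwa [hgSc.closure_eq] at this
    exact Set.mem_biUnion (hn0 ▸ hgT n0) hx
  exact hseq.isClosed


theorem stmt12 {G X : Type*} [Group G] [MetricSpace X] [MulAction G X] [AddAction ℝ X]
    (hiso : ∀ g : G, Isometry (fun x : X => g • x))
    (hproper : ∀ K : Set X, IsCompact K → {g : G | (K ∩ g • K).Nonempty}.Finite)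
    (hflowcont : Continuous fun p : ℝ × X => p.1 +ᵥ p.2)
    (hcomm : ∀ (g : G) (t : ℝ) (x : X), t +ᵥ (g • x) = g • (t +ᵥ x))
    (γ : ℝ) (hγ : 0 < γ)
    (Xaxes : Set X)
    (hXaxes : Xaxes = {x : X | (¬ ∃ t : ℝ, 0 < t ∧ t +ᵥ x = x) ∧
      ∃ g : G, ∃ t : ℝ, 0 < t ∧ t ≤ γ ∧ t +ᵥ x = g • x})
    (c : X) (hc : c ∈ Xaxes)
    (FL : Set X) (hFL : FL = Set.range fun t : ℝ => t +ᵥ c) :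
    -- the G-orbit of y = [c] is closed in Y_axes: its preimage under the quotient map
    -- is closed in the subspace X_axes
    IsClosed ((Subtype.val : Xaxes → X) ⁻¹' (⋃ g : G, g • FL)) ∧
      -- and discrete: each point g·y is isolated, i.e. there is a flow-invariant
      -- relatively open subset of X_axes meeting the orbit preimage exactly in g·FL
      ∀ g : G, ∃ W : Set X,
        (∃ O : Set X, IsOpen O ∧ W = O ∩ Xaxes) ∧
        (∀ (t : ℝ), ∀ x ∈ W, t +ᵥ x ∈ W) ∧
        g • FL ⊆ W ∧
        W ∩ (⋃ h : G, h • FL) = g • FL := by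
  
  have hc' := hXaxes ▸ hc
  obtain ⟨hnp, g0, t0, ht0pos, ht0le, ht0⟩ := hc'
  set S : Set X := (fun t : ℝ => t +ᵥ c) '' Set.Icc 0 t0 with hSdef
  have hcont : Continuous (fun t : ℝ => t +ᵥ c) :=
    hflowcont.comp (continuous_id.prodMk continuous_const)
  have hScomp : IsCompact S := isCompact_Icc.image hcont
  have hmemFL : ∀ (h : G) (x : X), x ∈ h • FL ↔ ∃ t : ℝ, h • (t +ᵥ c) = x := by
    intro h x
    rw [hFL]
    constructor
    · rintro ⟨y, ⟨t, rfl⟩, rfl⟩; exact ⟨t, rfl⟩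
    · rintro ⟨t, rfl⟩; exact ⟨t +ᵥ c, ⟨t, rfl⟩, rfl⟩
  have hneg : (-t0) +ᵥ c = g0⁻¹ • c := by
    have h1 : t0 +ᵥ (g0⁻¹ • c) = c := by rw [hcomm, ht0, inv_smul_smul]
    calc (-t0) +ᵥ c = (-t0) +ᵥ (t0 +ᵥ (g0⁻¹ • c)) := by rw [h1]
    _ = g0⁻¹ • c := by rw [← add_vadd]; simp
  have hpow : ∀ n : ℤ, ((n : ℝ) * t0) +ᵥ c = g0 ^ n • c := by
    intro n
    induction n using Int.induction_on with
    | zero => simp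
    | succ n ih =>
      have key : (((n : ℤ) + 1 : ℤ) : ℝ) * t0 = t0 + ((n : ℤ) : ℝ) * t0 := by push_cast; ring
      rw [key, add_vadd, ih, hcomm, ht0, smul_smul, ← zpow_add_one]
    | pred n ih =>
      have key : ((-(n : ℤ) - 1 : ℤ) : ℝ) * t0 = -t0 + ((-(n : ℤ) : ℤ) : ℝ) * t0 := by
        push_cast; ring
      rw [key, add_vadd, ih, hcomm, hneg, smul_smul, ← zpow_sub_one]
  -- decomposition of flow-line points
  have hdecomp : ∀ t : ℝ, ∃ n : ℤ, ∃ s ∈ S, t +ᵥ c = g0 ^ n • s := by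
    intro t
    set n : ℤ := ⌊t / t0⌋ with hn
    set r : ℝ := t - (n : ℝ) * t0 with hr
    have hr0 : 0 ≤ r := Int.sub_floor_div_mul_nonneg t ht0pos
    have hrlt : r < t0 := Int.sub_floor_div_mul_lt t ht0pos
    refine ⟨n, r +ᵥ c, ⟨r, ⟨hr0, hrlt.le⟩, rfl⟩, ?_⟩
    have : t = (n : ℝ) * t0 + r := by rw [hr]; ring
    rw [this, add_comm, add_vadd, hpow, hcomm]
  -- flow lines that intersect are equal
  have hsub : ∀ (h k : G) (t1 t2 : ℝ), h • (t1 +ᵥ c) = k • (t2 +ᵥ c) → h • FL ⊆ k • FL := by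
    intro h k t1 t2 heq x hx
    obtain ⟨t, rfl⟩ := (hmemFL h x).mp hx
    refine (hmemFL k _).mpr ⟨t - t1 + t2, ?_⟩
    calc k • ((t - t1 + t2) +ᵥ c) = k • ((t - t1) +ᵥ (t2 +ᵥ c)) := by rw [← add_vadd]
    _ = (t - t1) +ᵥ (k • (t2 +ᵥ c)) := by rw [hcomm]
    _ = (t - t1) +ᵥ (h • (t1 +ᵥ c)) := by rw [heq]
    _ = h • ((t - t1) +ᵥ (t1 +ᵥ c)) := by rw [hcomm]
    _ = h • (t +ᵥ c) := by rw [← add_vadd]; ring_nf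
  have hinter : ∀ h k : G, (h • FL ∩ k • FL).Nonempty → h • FL = k • FL := by
    rintro h k ⟨x, hxh, hxk⟩
    obtain ⟨t1, h1⟩ := (hmemFL h x).mp hxh
    obtain ⟨t2, h2⟩ := (hmemFL k x).mp hxk
    exact Set.Subset.antisymm (hsub h k t1 t2 (h1.trans h2.symm))
      (hsub k h t2 t1 (h2.trans h1.symm))
  -- elements of h • FL rewritten via S
  have hcoset : ∀ (h : G) (x : X), x ∈ h • FL → ∃ k : G, k • FL = h • FL ∧ x ∈ k • S := by
    intro h x hx
    obtain ⟨t, rfl⟩ := (hmemFL h x).mp hx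
    obtain ⟨n, s, hsS, hts⟩ := hdecomp t
    refine ⟨h * g0 ^ n, ?_, ?_⟩
    · refine hinter _ _ ⟨(h * g0 ^ n) • c, ?_, ?_⟩
      · exact (hmemFL _ _).mpr ⟨0, by rw [zero_vadd]⟩
      · refine (hmemFL _ _).mpr ⟨(n : ℝ) * t0, ?_⟩
        rw [hpow, smul_smul]
    · refine ⟨s, hsS, ?_⟩
      show (h * g0 ^ n) • s = h • (t +ᵥ c)
      rw [mul_smul, ← hts]
  have hSsubFL : ∀ (h : G), h • S ⊆ h • FL := by
    intro h
    apply Set.smul_set_mono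
    rintro x ⟨r, _, rfl⟩
    rw [hFL]; exact ⟨r, rfl⟩
  -- Xaxes invariances
  have hXflow : ∀ (t : ℝ) (x : X), x ∈ Xaxes → t +ᵥ x ∈ Xaxes := by
    intro t x hx
    rw [hXaxes] at hx ⊢
    obtain ⟨h1, g, t1, hp1, hl1, he1⟩ := hx
    constructor
    · rintro ⟨s, hs, hsx⟩
      refine h1 ⟨s, hs, ?_⟩
      have : (-t) +ᵥ (s +ᵥ (t +ᵥ x)) = (-t) +ᵥ (t +ᵥ x) := by rw [hsx]
      rw [← add_vadd, ← add_vadd, ← add_vadd] at this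
      have h2 : -t + s + t = s := by ring
      have h3 : -t + t = 0 := by ring
      rw [h2, h3, zero_vadd] at this
      exact this
    · refine ⟨g, t1, hp1, hl1, ?_⟩
      calc t1 +ᵥ (t +ᵥ x) = (t1 + t) +ᵥ x := by rw [← add_vadd]
      _ = t +ᵥ (t1 +ᵥ x) := by rw [← add_vadd, add_comm]
      _ = t +ᵥ (g • x) := by rw [he1]
      _ = g • (t +ᵥ x) := hcomm g t x
  have hXg : ∀ (g : G) (x : X), x ∈ Xaxes → g • x ∈ Xaxes := by
    intro g x hx
    rw [hXaxes] at hx ⊢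
    obtain ⟨h1, g1, t1, hp1, hl1, he1⟩ := hx
    constructor
    · rintro ⟨s, hs, hsx⟩
      refine h1 ⟨s, hs, ?_⟩
      rw [hcomm] at hsx
      exact smul_left_cancel g hsx
    · refine ⟨g * g1 * g⁻¹, t1, hp1, hl1, ?_⟩
      rw [hcomm, he1, smul_smul, smul_smul]
      congr 1
      group
  have hFLX : ∀ (h : G), h • FL ⊆ Xaxes := by
    intro h x hx
    obtain ⟨t, rfl⟩ := (hmemFL h x).mp hx
    exact hXg h _ (hXflow t c hc)
  -- Part 1
  have hD : (⋃ g : G, g • FL) = ⋃ g ∈ (Set.univ : Set G), g • S := by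
    apply Set.Subset.antisymm
    · rintro x hx
      rw [Set.mem_iUnion] at hx
      obtain ⟨h, hx⟩ := hx
      obtain ⟨k, _, hk⟩ := hcoset h x hx
      exact Set.mem_biUnion (Set.mem_univ k) hk
    · rintro x hx
      rw [Set.mem_iUnion₂] at hx
      obtain ⟨h, _, hx⟩ := hx
      rw [Set.mem_iUnion]
      exact ⟨h, hSsubFL h hx⟩
  have part1 : IsClosed (⋃ g : G, g • FL) := by
    rw [hD]; exact closed_union_smul hiso hproper hScomp _
  refine ⟨part1.preimage continuous_subtype_val, ?_⟩
  -- Part 2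
  intro g
  set T : Set G := {h : G | h • FL ≠ g • FL} with hT
  set C : Set X := ⋃ h ∈ T, h • S with hC
  have hCclosed : IsClosed C := closed_union_smul hiso hproper hScomp T
  have hCFL : C = ⋃ h ∈ T, h • FL := by
    apply Set.Subset.antisymm
    · rintro x hx
      rw [Set.mem_iUnion₂] at hx
      obtain ⟨h, hhT, hx⟩ := hx
      exact Set.mem_biUnion hhT (hSsubFL h hx)
    · rintro x hx
      rw [Set.mem_iUnion₂] at hx
      obtain ⟨h, hhT, hx⟩ := hx
      obtain ⟨k, hkh, hk⟩ := hcoset h x hx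
      refine Set.mem_biUnion ?_ hk
      rw [hT, Set.mem_setOf_eq, hkh]
      exact hhT
  refine ⟨Cᶜ ∩ Xaxes, ⟨Cᶜ, hCclosed.isOpen_compl, rfl⟩, ?_, ?_, ?_⟩
  · -- flow invariance
    rintro t x ⟨hxC, hxX⟩
    refine ⟨?_, hXflow t x hxX⟩
    intro htC
    apply hxC
    rw [hCFL] at htC ⊢
    rw [Set.mem_iUnion₂] at htC
    obtain ⟨h, hhT, htC⟩ := htC
    obtain ⟨s, hs⟩ := (hmemFL h _).mp htC
    refine Set.mem_biUnion hhT ((hmemFL h x).mpr ⟨-t + s, ?_⟩)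
    have : (-t) +ᵥ (h • (s +ᵥ c)) = (-t) +ᵥ (t +ᵥ x) := by rw [hs]
    rw [hcomm, ← add_vadd, ← add_vadd, neg_add_cancel, zero_vadd] at this
    exact this
  · -- g • FL ⊆ W
    intro x hx
    refine ⟨?_, hFLX g hx⟩
    intro hxC
    rw [hCFL, Set.mem_iUnion₂] at hxC
    obtain ⟨h, hhT, hxh⟩ := hxC
    exact hhT (hinter h g ⟨x, hxh, hx⟩)
  · -- exact intersection
    apply Set.Subset.antisymm
    · rintro x ⟨⟨hxC, _⟩, hxU⟩
      rw [Set.mem_iUnion] at hxU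
      obtain ⟨h, hxh⟩ := hxU
      by_cases hhT : h ∈ T
      · exact absurd (hCFL ▸ Set.mem_biUnion hhT hxh) hxC
      · rw [hT, Set.mem_setOf_eq, not_not] at hhT
        exact hhT ▸ hxh
    · intro x hx
      refine ⟨⟨?_, hFLX g hx⟩, Set.mem_iUnion.mpr ⟨g, hx⟩⟩
      intro hxC
      rw [hCFL, Set.mem_iUnion₂] at hxC
      obtain ⟨h, hhT, hxh⟩ := hxC
      exact hhT (hinter h g ⟨x, hxh, hx⟩)
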